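/- Assume 𝔽 is composition-consistent. Let S_T be a nonnegative random variable, and suppose there exists ℙ′ ∈ 𝒫 such that F_{S_T}^{ℙ′} ⪯_𝔽 F_{S_T}^{ℙ} for all ℙ ∈ 𝒫, and such that the likelihood ratio ℓ^{ℙ′} = dℙ′/dℚ satisfies ℓ^{ℙ′} = f(S_T) for some f ∈ 𝔽. Then ℙ′ is a least favorable measure with respect to 𝔽, i.e., F_{ℓ^{ℙ′}}^{ℙ′} ⪯_𝔽 F_{ℓ^{ℙ′}}^{ℙ} for all ℙ ∈ 𝒫. If, additionally, S_T is continuously distributed under ℙ′ (its CDF under ℙ′ is continuous) and f is strictly increasing, then ℓ^{ℙ′} is continuously distributed under ℙ′. -/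

import Mathlib

open MeasureTheory Set Real

noncomputable section

/-- CDF of a distribution (measure) on `ℝ`. -/
def mcdf (μ : Measure ℝ) : ℝ → ℝ := fun x => (μ (Iic x)).toReal

/-- CDF of the random variable `X` under `P`. -/
def rvCdf {Ω : Type*} [MeasurableSpace Ω] (P : Measure Ω) (X : Ω → ℝ) : ℝ → ℝ :=
  mcdf (P.map X)

/-- Integral stochastic ordering w.r.t. a class `𝔽`, between distributions on `ℝ`. -/
def IntOrder (𝔽 : Set (ℝ → ℝ)) (μ ν : Measure ℝ) : Prop :=
  ∀ f ∈ 𝔽, Integrable f μ → Integrable f ν → ∫ x, f x ∂μ ≤ ∫ x, f x ∂ν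

open ProbabilityTheory in
lemma mcdf_continuous_iff (μ : Measure ℝ) [IsProbabilityMeasure μ] :
    Continuous (mcdf μ) ↔ ∀ x, μ {x} = 0 := by
  have heq : mcdf μ = ⇑(cdf μ) := by
    funext x; rw [mcdf, cdf_eq_real, measureReal_def]
  have hsing : ∀ x : ℝ, μ {x} = ENNReal.ofReal (cdf μ x - Function.leftLim (cdf μ) x) := by
    intro x
    conv_lhs => rw [← measure_cdf (μ := μ)]
    exact (cdf μ).measure_singleton x
  rw [heq]
  constructor
  · intro hc x
    rw [hsing x]
    have hca : ContinuousAt (cdf μ) x := hc.continuousAt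
    have h1 : Function.leftLim (cdf μ) x = Function.rightLim (cdf μ) x :=
      ((cdf μ).mono.continuousAt_iff_leftLim_eq_rightLim).1 hca
    rw [h1, (cdf μ).rightLim_eq, sub_self, ENNReal.ofReal_zero]
  · intro h
    rw [continuous_iff_continuousAt]
    intro x
    rw [(cdf μ).mono.continuousAt_iff_leftLim_eq_rightLim, (cdf μ).rightLim_eq]
    have h0 := h x
    rw [hsing x, ENNReal.ofReal_eq_zero, sub_nonpos] at h0
    exact le_antisymm ((cdf μ).mono.leftLim_le le_rfl) h0

theorem stmt1 {Ω : Type*} [MeasurableSpace Ω]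
    (Q : Measure Ω) [IsProbabilityMeasure Q]
    (Ps : Set (Measure Ω))
    (hPsprob : ∀ P ∈ Ps, IsProbabilityMeasure P)
    (hPsequiv : ∀ P ∈ Ps, P ≪ Q ∧ Q ≪ P)
    (𝔽 : Set (ℝ → ℝ))
    (h𝔽meas : ∀ f ∈ 𝔽, Measurable f)
    (h𝔽comp : ∀ f ∈ 𝔽, ∀ g ∈ 𝔽, f ∘ g ∈ 𝔽)
    (S : Ω → ℝ) (hS : Measurable S) (hSpos : ∀ ω, 0 ≤ S ω)
    (P' : Measure Ω) (hP' : P' ∈ Ps)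
    (hdom : ∀ P ∈ Ps, IntOrder 𝔽 (P'.map S) (P.map S))
    (f : ℝ → ℝ) (hf : f ∈ 𝔽)
    (hlr : P' = Q.withDensity (fun ω => ENNReal.ofReal (f (S ω)))) :
    (∀ P ∈ Ps, IntOrder 𝔽 (P'.map (fun ω => f (S ω))) (P.map (fun ω => f (S ω)))) ∧
    (Continuous (rvCdf P' S) → StrictMonoOn f (Ici 0) →
      Continuous (rvCdf P' (fun ω => f (S ω)))) := by
  have hfm : Measurable f := h𝔽meas f hf
  have hmap : ∀ P : Measure Ω, P.map (fun ω => f (S ω)) = (P.map S).map f := by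
    intro P
    exact (Measure.map_map hfm hS).symm
  constructor
  · intro P hP g hg hgi1 hgi2
    rw [hmap P', hmap P] at *
    have hgm : Measurable g := h𝔽meas g hg
    rw [integral_map hfm.aemeasurable hgm.aestronglyMeasurable,
      integral_map hfm.aemeasurable hgm.aestronglyMeasurable]
    have h1 : Integrable (g ∘ f) (P'.map S) :=
      (integrable_map_measure hgm.aestronglyMeasurable hfm.aemeasurable).1 hgi1
    have h2 : Integrable (g ∘ f) (P.map S) :=
      (integrable_map_measure hgm.aestronglyMeasurable hfm.aemeasurable).1 hgi2
    exact hdom P hP (g ∘ f) (h𝔽comp g hg f hf) h1 h2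
  · intro hc hmono
    haveI : IsProbabilityMeasure P' := hPsprob P' hP'
    haveI : IsProbabilityMeasure (P'.map S) := Measure.isProbabilityMeasure_map hS.aemeasurable
    haveI : IsProbabilityMeasure (P'.map (fun ω => f (S ω))) :=
      Measure.isProbabilityMeasure_map (hfm.comp hS).aemeasurable
    have hatom : ∀ x : ℝ, (P'.map S) {x} = 0 :=
      (mcdf_continuous_iff (P'.map S)).1 hc
    rw [rvCdf]
    rw [mcdf_continuous_iff]
    intro y
    rw [Measure.map_apply (show Measurable fun ω => f (S ω) from hfm.comp hS) (measurableSet_singleton y)]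
    by_cases hex : ∃ x : ℝ, 0 ≤ x ∧ f x = y
    · obtain ⟨x, hx0, hxy⟩ := hex
      have hsub : (fun ω => f (S ω)) ⁻¹' {y} ⊆ S ⁻¹' {x} := by
        intro ω hω
        simp only [mem_preimage, mem_singleton_iff] at *
        exact hmono.injOn (hSpos ω) hx0 (hω.trans hxy.symm)
      refine le_antisymm ?_ zero_le
      calc P' ((fun ω => f (S ω)) ⁻¹' {y}) ≤ P' (S ⁻¹' {x}) := measure_mono hsub
        _ = (P'.map S) {x} := (Measure.map_apply hS (measurableSet_singleton x)).symm
        _ = 0 := hatom x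
    · have : (fun ω => f (S ω)) ⁻¹' {y} = ∅ := by
        ext ω
        simp only [mem_preimage, mem_singleton_iff, mem_empty_iff_false, iff_false]
        intro h
        exact hex ⟨S ω, hSpos ω, h⟩
      rw [this, measure_empty]
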